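/- Let G = (G_t)_{t∈ℤ} be an n-dimensional stationary-increment process with G_0 = 0, and suppose that E| log‖G_1‖ · 1_{{‖G_1‖>1}} |^{1+δ} < ∞ for some δ > 0. Then for every n×n symmetric positive definite matrix H, the partial sums Σ_{k=l}^0 e^{kH} Δ_k G converge almost surely (hence in probability) as l → −∞ to an almost surely finite random vector; in particular G ∈ 𝒢_H for every H > 0. -/

import Mathlib

set_option autoImplicit false

open MeasureTheory Filter Finset Matrix Topology

variable {Ω : Type*}

/-- Two `ℤ`-indexed `ℝⁿ`-valued processes have the same finite-dimensional
distributions. -/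
def SameFDD {n : ℕ} [MeasurableSpace Ω] (μ : Measure Ω)
    (X Y : ℤ → Ω → (Fin n → ℝ)) : Prop :=
  ∀ (m : ℕ) (t : Fin m → ℤ),
    μ.map (fun ω (i : Fin m) => X (t i) ω) = μ.map (fun ω (i : Fin m) => Y (t i) ω)

/-- Strict stationarity of a `ℤ`-indexed process. -/
def IsStationaryProcess {n : ℕ} [MeasurableSpace Ω] (μ : Measure Ω)
    (X : ℤ → Ω → (Fin n → ℝ)) : Prop :=
  ∀ s : ℤ, SameFDD μ (fun t => X (t + s)) X

/-- Stationarity of increments of a `ℤ`-indexed process. -/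
def HasStationaryIncrements {n : ℕ} [MeasurableSpace Ω] (μ : Measure Ω)
    (G : ℤ → Ω → (Fin n → ℝ)) : Prop :=
  ∀ s : ℤ, SameFDD μ (fun t ω => G (t + s) ω - G s ω) (fun t ω => G t ω - G 0 ω)

/-- The matrix exponential `e^{tH}` for an integer `t`. -/
noncomputable def zexp {n : ℕ} (H : Matrix (Fin n) (Fin n) ℝ) (t : ℤ) :
    Matrix (Fin n) (Fin n) ℝ :=
  NormedSpace.exp ((t : ℝ) • H)

/-- The partial sum `Σ_{k=l}^0 e^{kH} Δ_k G`. -/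
noncomputable def partialSumG {n : ℕ} (H : Matrix (Fin n) (Fin n) ℝ)
    (G : ℤ → Ω → (Fin n → ℝ)) (l : ℤ) (ω : Ω) : Fin n → ℝ :=
  ∑ k ∈ Finset.Icc l 0, (zexp H k).mulVec (G k ω - G (k - 1) ω)

/-- `G ∈ 𝒢_H` : `G` is a stationary-increment process starting from `0` whose partial
sums `Σ_{k=l}^0 e^{kH} Δ_k G` converge in probability as `l → −∞`. -/
def MemG {n : ℕ} [MeasurableSpace Ω] (μ : Measure Ω) (H : Matrix (Fin n) (Fin n) ℝ)
    (G : ℤ → Ω → (Fin n → ℝ)) : Prop :=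
  (∀ ω, G 0 ω = 0) ∧ HasStationaryIncrements μ G ∧
    ∃ ξ : Ω → (Fin n → ℝ), TendstoInMeasure μ (fun l => partialSumG H G l) Filter.atBot ξ

/-- The Euclidean norm on `ℝⁿ`. -/
noncomputable def eucNorm {n : ℕ} (x : Fin n → ℝ) : ℝ :=
  Real.sqrt (∑ i, x i ^ 2)

section AuxLemmas

lemma eucNorm_nonneg {n : ℕ} (x : Fin n → ℝ) : 0 ≤ eucNorm x := Real.sqrt_nonneg _

lemma norm_le_eucNorm {n : ℕ} (x : Fin n → ℝ) : ‖x‖ ≤ eucNorm x := by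
  rw [pi_norm_le_iff_of_nonneg (eucNorm_nonneg x)]
  intro i
  rw [Real.norm_eq_abs, ← Real.sqrt_sq_eq_abs]
  exact Real.sqrt_le_sqrt (Finset.single_le_sum (f := fun j => x j ^ 2)
    (fun j _ => sq_nonneg _) (Finset.mem_univ i))

lemma continuous_eucNorm {n : ℕ} : Continuous (eucNorm (n := n)) :=
  Real.continuous_sqrt.comp (continuous_finset_sum _ fun i _ => ((continuous_apply i).pow 2))

lemma eucNorm_eq_sqrt_dot {n : ℕ} (x : Fin n → ℝ) : eucNorm x = Real.sqrt (x ⬝ᵥ x) := by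
  simp [eucNorm, dotProduct, sq]

lemma eucNorm_mulVec_orth {n : ℕ} {U : Matrix (Fin n) (Fin n) ℝ} (hU : Uᵀ * U = 1)
    (y : Fin n → ℝ) : eucNorm (U *ᵥ y) = eucNorm y := by
  have h : (U *ᵥ y) ⬝ᵥ (U *ᵥ y) = y ⬝ᵥ y := by
    rw [Matrix.dotProduct_mulVec, Matrix.vecMul_mulVec, hU, Matrix.vecMul_one]
  rw [eucNorm_eq_sqrt_dot, eucNorm_eq_sqrt_dot, h]

lemma eucNorm_diag_mulVec {n : ℕ} (d : Fin n → ℝ) (c : ℝ) (hc : 0 ≤ c)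
    (hd : ∀ i, |d i| ≤ c) (y : Fin n → ℝ) :
    eucNorm ((Matrix.diagonal d) *ᵥ y) ≤ c * eucNorm y := by
  have h1 : eucNorm ((Matrix.diagonal d) *ᵥ y) = Real.sqrt (∑ i, (d i * y i) ^ 2) := by
    unfold eucNorm
    congr 1
    exact Finset.sum_congr rfl fun i _ => by rw [Matrix.mulVec_diagonal]
  rw [h1]
  have h2 : ∑ i, (d i * y i) ^ 2 ≤ c ^ 2 * ∑ i, y i ^ 2 := by
    rw [Finset.mul_sum]
    refine Finset.sum_le_sum fun i _ => ?_
    rw [mul_pow]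
    have : d i ^ 2 ≤ c ^ 2 := sq_le_sq' (neg_le_of_abs_le (hd i)) (le_of_abs_le (hd i))
    exact mul_le_mul_of_nonneg_right this (sq_nonneg _)
  calc Real.sqrt (∑ i, (d i * y i) ^ 2) ≤ Real.sqrt (c ^ 2 * ∑ i, y i ^ 2) :=
        Real.sqrt_le_sqrt h2
    _ = c * eucNorm y := by
        rw [Real.sqrt_mul (sq_nonneg c), Real.sqrt_sq hc]; rfl

lemma zexp_spectral {n : ℕ} (H : Matrix (Fin n) (Fin n) ℝ) (hH : H.PosDef) (k : ℤ) :
    zexp H k = (hH.1.eigenvectorUnitary : Matrix (Fin n) (Fin n) ℝ) *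
      Matrix.diagonal (fun i => Real.exp ((k : ℝ) * hH.1.eigenvalues i)) *
      (star (hH.1.eigenvectorUnitary : Matrix (Fin n) (Fin n) ℝ)) := by
  classical
  set U : Matrix (Fin n) (Fin n) ℝ := (hH.1.eigenvectorUnitary : Matrix (Fin n) (Fin n) ℝ) with hUdef
  have hmem := hH.1.eigenvectorUnitary.2
  have h2 : U * star U = 1 := (Matrix.mem_unitaryGroup_iff).mp hmem
  have h1 : star U * U = 1 := (Matrix.mem_unitaryGroup_iff').mp hmem
  have hUnit : IsUnit U := ⟨⟨U, star U, h2, h1⟩, rfl⟩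
  have hUinv : U⁻¹ = star U := Matrix.inv_eq_right_inv h2
  have hspec : H = U * Matrix.diagonal hH.1.eigenvalues * U⁻¹ := by
    rw [hUinv]
    have := hH.1.spectral_theorem
    rwa [RCLike.ofReal_real_eq_id, Function.id_comp] at this
  have hsmul : (k : ℝ) • H = U * Matrix.diagonal (fun i => (k : ℝ) * hH.1.eigenvalues i) * U⁻¹ := by
    conv_lhs => rw [hspec]
    show (k : ℝ) • (U * Matrix.diagonal hH.1.eigenvalues * U⁻¹)
        = U * Matrix.diagonal ((k : ℝ) • hH.1.eigenvalues) * U⁻¹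
    rw [Matrix.diagonal_smul, Matrix.mul_smul, Matrix.smul_mul]
  rw [zexp, hsmul, Matrix.exp_conj _ _ hUnit, Matrix.exp_diagonal, hUinv]
  congr 2
  rw [Pi.exp_def]
  funext i
  rw [← Real.exp_eq_exp_ℝ]

lemma zexp_decay {n : ℕ} (H : Matrix (Fin n) (Fin n) ℝ) (hH : H.PosDef) :
    ∃ r : ℝ, 0 < r ∧ r < 1 ∧ ∀ k : ℤ, k ≤ 0 → ∀ x : Fin n → ℝ,
      eucNorm ((zexp H k) *ᵥ x) ≤ r ^ (-k).toNat * eucNorm x := by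
  classical
  rcases Nat.eq_zero_or_pos n with hn | hn
  · subst hn
    refine ⟨1/2, by norm_num, by norm_num, fun k hk x => ?_⟩
    have h0 : ∀ y : Fin 0 → ℝ, eucNorm y = 0 := fun y => by simp [eucNorm]
    rw [h0, h0, mul_zero]
  · haveI : Nonempty (Fin n) := Fin.pos_iff_nonempty.mp hn
    set lam := hH.1.eigenvalues with hlam
    set lmin : ℝ := Finset.univ.inf' Finset.univ_nonempty lam with hlmin
    have hlmin_pos : 0 < lmin := by
      rw [hlmin, Finset.lt_inf'_iff]
      exact fun i _ => hH.eigenvalues_pos i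
    refine ⟨Real.exp (-lmin), Real.exp_pos _, by
      rw [Real.exp_lt_one_iff]; linarith, fun k hk x => ?_⟩
    set U : Matrix (Fin n) (Fin n) ℝ := (hH.1.eigenvectorUnitary : Matrix (Fin n) (Fin n) ℝ)
      with hUdef
    have hmem := hH.1.eigenvectorUnitary.2
    have h2 : U * star U = 1 := (Matrix.mem_unitaryGroup_iff).mp hmem
    have h1 : star U * U = 1 := (Matrix.mem_unitaryGroup_iff').mp hmem
    have hstar : star U = Uᵀ := by
      rw [Matrix.star_eq_conjTranspose, Matrix.conjTranspose]
      congr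
    have hUorth : Uᵀ * U = 1 := by rw [← hstar]; exact h1
    have hUTorth : (Uᵀ)ᵀ * Uᵀ = 1 := by rw [Matrix.transpose_transpose, ← hstar]; exact h2
    rw [zexp_spectral H hH k]
    set D := Matrix.diagonal (fun i => Real.exp ((k : ℝ) * lam i)) with hD
    rw [← Matrix.mulVec_mulVec, ← Matrix.mulVec_mulVec]
    rw [eucNorm_mulVec_orth hUorth]
    have hm : ((((-k).toNat : ℕ) : ℝ)) = -(k : ℝ) := by
      have : (((-k).toNat : ℕ) : ℤ) = -k := Int.toNat_of_nonneg (by omega)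
      exact_mod_cast congrArg (fun z : ℤ => (z : ℝ)) this
    have hbound : ∀ i, |Real.exp ((k : ℝ) * lam i)| ≤ Real.exp (-lmin) ^ (-k).toNat := by
      intro i
      rw [abs_of_pos (Real.exp_pos _), ← Real.exp_nat_mul, hm]
      apply Real.exp_le_exp.mpr
      have hle : lmin ≤ lam i := Finset.inf'_le _ (Finset.mem_univ i)
      have hk' : (k : ℝ) ≤ 0 := by exact_mod_cast hk
      nlinarith
    calc eucNorm (D *ᵥ (star U *ᵥ x))
        ≤ Real.exp (-lmin) ^ (-k).toNat * eucNorm (star U *ᵥ x) :=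
          eucNorm_diag_mulVec _ _ (pow_nonneg (Real.exp_pos _).le _) hbound _
      _ = Real.exp (-lmin) ^ (-k).toNat * eucNorm x := by
          rw [hstar, eucNorm_mulVec_orth hUTorth]

section Aux
open MeasureTheory Filter Finset Matrix Topology

lemma measurable_mulVec' {n : ℕ} {Ω : Type*} [MeasurableSpace Ω] (A : Matrix (Fin n) (Fin n) ℝ)
    {f : Ω → Fin n → ℝ} (hf : Measurable f) : Measurable fun ω => A *ᵥ f ω := by
  apply measurable_pi_lambda
  intro i
  simp only [Matrix.mulVec, dotProduct]
  exact Finset.measurable_sum _ fun j _ =>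
    measurable_const.mul ((measurable_pi_apply j).comp hf)

lemma tendsto_sub_toNat : Tendsto (fun l : ℤ => (1 - l).toNat) atBot atTop := by
  rw [tendsto_atTop]
  intro b
  rw [eventually_atBot]
  exact ⟨1 - (b : ℤ), fun l hl => by omega⟩

lemma partialSumG_eq {Ω : Type*} {n : ℕ} (H : Matrix (Fin n) (Fin n) ℝ)
    (G : ℤ → Ω → Fin n → ℝ) (l : ℤ) (hl : l ≤ 0) (ω : Ω) :
    partialSumG H G l ω = ∑ m ∈ Finset.range ((1 - l).toNat),
      (zexp H (-(m : ℤ))) *ᵥ (G (-(m : ℤ)) ω - G ((-(m : ℤ)) - 1) ω) := by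
  unfold partialSumG
  refine Finset.sum_nbij' (i := fun k => (-k).toNat) (j := fun m : ℕ => -(m : ℤ))
    ?_ ?_ ?_ ?_ ?_
  · intro k hk; rw [Finset.mem_Icc] at hk; rw [Finset.mem_range]; omega
  · intro m hm; rw [Finset.mem_range] at hm; rw [Finset.mem_Icc]; omega
  · intro k hk; rw [Finset.mem_Icc] at hk; omega
  · intro m hm; rw [Finset.mem_range] at hm; omega
  · intro k hk; rw [Finset.mem_Icc] at hk
    have h : (-(((-k).toNat : ℕ) : ℤ)) = k := by omega
    rw [h]

end Aux


end AuxLemmas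

/-- if `G` is an `n`-dimensional stationary-increment process with
`G₀ = 0` whose increment `G₁` has a finite logarithmic moment of order `1 + δ`,
then for every symmetric positive definite matrix `H` the partial sums
`Σ_{k=l}^0 e^{kH} Δ_k G` converge almost surely (hence in probability) as
`l → −∞` to an (almost surely finite) random vector; in particular `G ∈ 𝒢_H`. -/
theorem stmt0 {n : ℕ} [MeasurableSpace Ω] (μ : Measure Ω) [IsProbabilityMeasure μ]
    (G : ℤ → Ω → (Fin n → ℝ)) (hmeas : ∀ t, Measurable (G t))
    (hsi : HasStationaryIncrements μ G) (hG0 : ∀ ω, G 0 ω = 0)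
    (δ : ℝ) (hδ : 0 < δ)
    (hlog : Integrable (fun ω =>
      Set.indicator {x : Fin n → ℝ | 1 < eucNorm x}
        (fun x => |Real.log (eucNorm x)| ^ (1 + δ)) (G 1 ω)) μ)
    (H : Matrix (Fin n) (Fin n) ℝ) (hH : H.PosDef) :
    (∃ ξ : Ω → (Fin n → ℝ),
        (∀ᵐ ω ∂μ, Tendsto (fun l => partialSumG H G l ω) Filter.atBot (𝓝 (ξ ω))) ∧
        TendstoInMeasure μ (fun l => partialSumG H G l) Filter.atBot ξ) ∧
      MemG μ H G := by
  classical
  obtain ⟨r, hr0, hr1, hdecay⟩ := zexp_decay H hH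
  set q : ℝ := Real.sqrt r with hq
  have hq0 : 0 < q := Real.sqrt_pos.mpr hr0
  have hq1 : q < 1 := by
    rw [hq, show (1 : ℝ) = Real.sqrt 1 by rw [Real.sqrt_one]]
    exact Real.sqrt_lt_sqrt hr0.le hr1
  set t : ℝ := q⁻¹ with ht
  have htq : q * t = 1 := mul_inv_cancel₀ hq0.ne'
  have ht0 : 0 < t := inv_pos.mpr hq0
  have ht1 : 1 < t := by nlinarith
  have hqq : q * q = r := Real.mul_self_sqrt hr0.le
  have hrt : r * t = q := by
    rw [ht, ← hqq]; field_simp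
  have hlogt : 0 < Real.log t := Real.log_pos ht1
  -- increments
  set X : ℤ → Ω → Fin n → ℝ := fun k ω => G k ω - G (k - 1) ω with hX
  have hXmeas : ∀ k, Measurable (X k) := fun k => (hmeas k).sub (hmeas (k - 1))
  have hident : ∀ k : ℤ, μ.map (X k) = μ.map (G 1) := by
    intro k
    have h := hsi (k - 1) 1 (fun _ => 1)
    simp only [show (1 : ℤ) + (k - 1) = k by ring] at h
    simp only [hG0, sub_zero] at h
    have hev : Measurable (fun f : Fin 1 → Fin n → ℝ => f 0) := measurable_pi_apply 0
    have hF1 : Measurable (fun ω (_ : Fin 1) => X k ω) :=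
      measurable_pi_lambda _ fun _ => hXmeas k
    have hF2 : Measurable (fun ω (_ : Fin 1) => G 1 ω) :=
      measurable_pi_lambda _ fun _ => hmeas 1
    calc μ.map (X k)
        = (μ.map (fun ω (_ : Fin 1) => X k ω)).map (fun f => f 0) := by
          rw [Measure.map_map hev hF1]; rfl
      _ = (μ.map (fun ω (_ : Fin 1) => G 1 ω)).map (fun f => f 0) := by
          have h' : Measure.map (fun ω (_ : Fin 1) => X k ω) μ
              = Measure.map (fun ω (_ : Fin 1) => G 1 ω) μ := h
          rw [h']
      _ = μ.map (G 1) := by rw [Measure.map_map hev hF2]; rfl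
  -- the log-moment function
  set W : Ω → ℝ := fun ω => Set.indicator {x : Fin n → ℝ | 1 < eucNorm x}
      (fun x => |Real.log (eucNorm x)| ^ (1 + δ)) (G 1 ω) with hW
  have hWint : Integrable W μ := hlog
  have hWnn : ∀ ω, 0 ≤ W ω := fun ω =>
    Set.indicator_nonneg (fun x _ => Real.rpow_nonneg (abs_nonneg _) _) _
  set I : ℝ := ∫ ω, W ω ∂μ with hI
  have hI0 : 0 ≤ I := integral_nonneg hWnn
  have hSmeas : ∀ c : ℝ, MeasurableSet {x : Fin n → ℝ | c < eucNorm x} :=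
    fun c => measurableSet_lt measurable_const continuous_eucNorm.measurable
  -- Markov-type bound
  have hmain : ∀ m : ℕ, 1 ≤ m →
      μ {ω | t ^ m < eucNorm (G 1 ω)}
        ≤ ENNReal.ofReal (I / ((m : ℝ) * Real.log t) ^ (1 + δ)) := by
    intro m hm
    set a : ℝ := ((m : ℝ) * Real.log t) ^ (1 + δ) with ha
    have hmpos : (0 : ℝ) < m := by exact_mod_cast hm
    have ha0 : 0 < a := Real.rpow_pos_of_pos (by positivity) _
    have hsub : {ω | t ^ m < eucNorm (G 1 ω)} ⊆ {ω | a ≤ W ω} := by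
      intro ω hω
      simp only [Set.mem_setOf_eq] at hω ⊢
      have h1t : 1 < t ^ m := one_lt_pow₀ ht1 (by omega)
      have h1e : 1 < eucNorm (G 1 ω) := lt_trans h1t hω
      have hWω : W ω = |Real.log (eucNorm (G 1 ω))| ^ (1 + δ) := by
        rw [hW]
        exact Set.indicator_of_mem (show G 1 ω ∈ {x : Fin n → ℝ | 1 < eucNorm x} from h1e) _
      rw [hWω, ha]
      have hlog3 : (m : ℝ) * Real.log t ≤ |Real.log (eucNorm (G 1 ω))| := by
        rw [show (m : ℝ) * Real.log t = Real.log (t ^ m) by rw [Real.log_pow]]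
        exact (Real.log_le_log (by positivity) hω.le).trans (le_abs_self _)
      exact Real.rpow_le_rpow (by positivity) hlog3 (by linarith)
    have hmarkov := mul_meas_ge_le_integral_of_nonneg
      (Filter.Eventually.of_forall hWnn) hWint a
    have hfin : μ {ω | a ≤ W ω} ≠ ⊤ := measure_ne_top μ _
    have h3 : (μ {ω | a ≤ W ω}).toReal ≤ I / a := by
      rw [le_div_iff₀ ha0]
      calc (μ {ω | a ≤ W ω}).toReal * a = a * (μ {ω | a ≤ W ω}).toReal := mul_comm _ _
        _ ≤ I := hmarkov
    calc μ {ω | t ^ m < eucNorm (G 1 ω)} ≤ μ {ω | a ≤ W ω} := measure_mono hsub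
      _ = ENNReal.ofReal ((μ {ω | a ≤ W ω}).toReal) := (ENNReal.ofReal_toReal hfin).symm
      _ ≤ ENNReal.ofReal (I / a) := ENNReal.ofReal_le_ofReal h3
  -- the bad events
  set A : ℕ → Set Ω := fun m => {ω | t ^ (m + 1) < eucNorm (X (-(m : ℤ) - 1) ω)} with hA
  have hAle : ∀ m : ℕ,
      μ (A m) ≤ ENNReal.ofReal (I / (((m : ℝ) + 1) * Real.log t) ^ (1 + δ)) := by
    intro m
    have hApre : A m = X (-(m : ℤ) - 1) ⁻¹' {x | t ^ (m + 1) < eucNorm x} := rfl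
    have hAeq : μ (A m) = μ {ω | t ^ (m + 1) < eucNorm (G 1 ω)} := by
      rw [hApre, ← Measure.map_apply (hXmeas _) (hSmeas _), hident,
        Measure.map_apply (hmeas 1) (hSmeas _)]
      rfl
    rw [hAeq]
    have hc : (((m + 1 : ℕ) : ℝ)) = (m : ℝ) + 1 := by push_cast; ring
    have := hmain (m + 1) (by omega)
    rwa [hc] at this
  have hgs : Summable (fun m : ℕ => I / (((m : ℝ) + 1) * Real.log t) ^ (1 + δ)) := by
    have h0 : Summable (fun m : ℕ => 1 / (m : ℝ) ^ (1 + δ)) :=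
      Real.summable_one_div_nat_rpow.mpr (by linarith)
    have h1 : Summable (fun m : ℕ => 1 / ((m : ℝ) + 1) ^ (1 + δ)) := by
      have h2 := (summable_nat_add_iff 1).mpr h0
      refine h2.congr fun m => ?_
      push_cast
      ring_nf
    have h3 := h1.mul_left (I / Real.log t ^ (1 + δ))
    refine h3.congr fun m => ?_
    rw [Real.mul_rpow (by positivity) hlogt.le, div_mul_div_comm, mul_one,
      mul_comm (Real.log t ^ (1 + δ))]
  have hAsum : (∑' m, μ (A m)) ≠ ⊤ := by
    have h4 : (∑' m, μ (A m))
        ≤ ∑' m : ℕ, ENNReal.ofReal (I / (((m : ℝ) + 1) * Real.log t) ^ (1 + δ)) :=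
      ENNReal.tsum_le_tsum hAle
    have h5 : (∑' m : ℕ, ENNReal.ofReal (I / (((m : ℝ) + 1) * Real.log t) ^ (1 + δ)))
        = ENNReal.ofReal (∑' m : ℕ, I / (((m : ℝ) + 1) * Real.log t) ^ (1 + δ)) :=
      (ENNReal.ofReal_tsum_of_nonneg (fun m => by positivity) hgs).symm
    exact ne_top_of_le_ne_top (by rw [h5]; exact ENNReal.ofReal_ne_top) h4
  -- the summands
  set v : ℕ → Ω → Fin n → ℝ := fun m ω => (zexp H (-(m : ℤ))) *ᵥ (X (-(m : ℤ)) ω) with hv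
  have hvmeas : ∀ m, Measurable (v m) := fun m => measurable_mulVec' _ (hXmeas _)
  have hkey : ∀ᵐ ω ∂μ, Summable (fun m => v m ω) := by
    filter_upwards [MeasureTheory.ae_eventually_notMem hAsum] with ω hω
    rw [eventually_atTop] at hω
    obtain ⟨N, hN⟩ := hω
    refine Summable.of_norm_bounded_eventually (g := fun m => q ^ m)
      (summable_geometric_of_lt_one hq0.le hq1) ?_
    rw [Nat.cofinite_eq_atTop, eventually_atTop]
    refine ⟨N + 1, fun m hm => ?_⟩
    have h6 : ω ∉ A (m - 1) := hN (m - 1) (by omega)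
    have h7 : eucNorm (X (-(m : ℤ)) ω) ≤ t ^ m := by
      have h8 : (-(((m - 1 : ℕ) : ℤ))) - 1 = -(m : ℤ) := by omega
      have h9 : (m - 1) + 1 = m := by omega
      simp only [hA, Set.mem_setOf_eq, h8, h9, not_lt] at h6
      exact h6
    calc ‖v m ω‖ ≤ eucNorm (v m ω) := norm_le_eucNorm _
      _ ≤ r ^ ((-(-(m : ℤ))).toNat) * eucNorm (X (-(m : ℤ)) ω) :=
          hdecay (-(m : ℤ)) (by omega) (X (-(m : ℤ)) ω)
      _ = r ^ m * eucNorm (X (-(m : ℤ)) ω) := by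
          rw [show ((-(-(m : ℤ))).toNat) = m by omega]
      _ ≤ r ^ m * t ^ m :=
          mul_le_mul_of_nonneg_left h7 (pow_nonneg hr0.le m)
      _ = q ^ m := by rw [← mul_pow, hrt]
  set ξ : Ω → Fin n → ℝ := fun ω => ∑' m, v m ω with hξ
  have hps : ∀ l : ℤ, l ≤ 0 → ∀ x : Ω,
      partialSumG H G l x = ∑ m ∈ Finset.range ((1 - l).toNat), v m x := by
    intro l hl x
    rw [partialSumG_eq H G l hl x]
  have haetend : ∀ᵐ ω ∂μ, Tendsto (fun l => partialSumG H G l ω) atBot (𝓝 (ξ ω)) := by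
    filter_upwards [hkey] with ω hω
    have h1 : Tendsto (fun N => ∑ m ∈ Finset.range N, v m ω) atTop (𝓝 (ξ ω)) :=
      hω.hasSum.tendsto_sum_nat
    have h3 := h1.comp tendsto_sub_toNat
    refine Filter.Tendsto.congr' ?_ h3
    filter_upwards [eventually_le_atBot (0 : ℤ)] with l hl
    exact (hps l hl ω).symm
  have hFmeas : ∀ N : ℕ, AEStronglyMeasurable (fun ω => ∑ m ∈ Finset.range N, v m ω) μ :=
    fun N => (Finset.measurable_sum _ fun m _ => hvmeas m).aestronglyMeasurable
  have hFtend : TendstoInMeasure μ (fun N ω => ∑ m ∈ Finset.range N, v m ω) atTop ξ := by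
    apply tendstoInMeasure_of_tendsto_ae hFmeas
    filter_upwards [hkey] with ω hω
    exact hω.hasSum.tendsto_sum_nat
  have hTIM : TendstoInMeasure μ (fun l => partialSumG H G l) atBot ξ := by
    intro ε hε
    have h1 := (hFtend ε hε).comp tendsto_sub_toNat
    refine Filter.Tendsto.congr' ?_ h1
    filter_upwards [eventually_le_atBot (0 : ℤ)] with l hl
    simp only [Function.comp_apply]
    congr 1
    ext x
    simp only [Set.mem_setOf_eq]
    rw [hps l hl x]
  exact ⟨⟨ξ, haetend, hTIM⟩, hG0, hsi, ξ, hTIM⟩
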